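/- Let α > 0 and let {a_k} be a strongly increasing sequence of positive reals (inf_k a_{k+1}/a_k > 1) and {b_k} any positive sequence (indexed N ≤ k ≤ M). Then Σ_{k=N}^{M} a_k (Σ_{i=k}^{M} b_i)^α ≈ Σ_{k=N}^{M} a_k b_k^α, with equivalence constants depending only on α and the increase ratio. -/

import Mathlib

open ENNReal

/-- The set of integers `k` with `N ≤ k ≤ M`, where `N, M` are extended reals
(so that `N = -∞` or `M = +∞` are allowed). -/
def zset (N M : EReal) : Set ℤ := {k : ℤ | N ≤ ((k : ℝ) : EReal) ∧ ((k : ℝ) : EReal) ≤ M}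

lemma ecast_le_ecast {k l : ℤ} : ((k : ℝ) : EReal) ≤ ((l : ℝ) : EReal) ↔ k ≤ l := by
  rw [EReal.coe_le_coe_iff]
  exact Int.cast_le

/-- Subadditivity of `rpow` with exponent in `(0,1]` over a countable sum, `ℝ≥0∞` version. -/
lemma tsum_rpow_le_of_le_one {α : ℝ} (hα : 0 < α) (h1 : α ≤ 1) (f : ℕ → ℝ≥0∞) :
    (∑' n, f n) ^ α ≤ ∑' n, f n ^ α := by
  have hfin : ∀ s : Finset ℕ, (∑ n ∈ s, f n) ^ α ≤ ∑ n ∈ s, f n ^ α := by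
    intro s
    induction s using Finset.cons_induction with
    | empty => simp [ENNReal.zero_rpow_of_pos hα]
    | cons a s ha ih =>
      rw [Finset.sum_cons, Finset.sum_cons]
      exact le_trans (ENNReal.rpow_add_le_add_rpow _ _ hα.le h1) (add_le_add_right ih _)
  rw [ENNReal.tsum_eq_iSup_sum, ← ENNReal.le_rpow_inv_iff hα]
  refine iSup_le fun s => ?_
  rw [ENNReal.le_rpow_inv_iff hα]
  exact (hfin s).trans (ENNReal.sum_le_tsum s)

/-- Key lemma: a weighted reverse power-sum inequality for `ℝ≥0∞`-valued sequences. -/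
lemma key_nat (α r : ℝ) (hα : 0 < α) (hr : 1 < r) :
    ∃ C0 : ℝ≥0∞, 0 < C0 ∧ C0 ≠ ⊤ ∧ ∀ f : ℕ → ℝ≥0∞,
      (∑' n, f n) ^ α ≤ C0 * ∑' n, (ENNReal.ofReal r) ^ n * f n ^ α := by
  set R := ENNReal.ofReal r with hRdef
  have hR1 : 1 < R := by
    rw [hRdef, ← ENNReal.ofReal_one]
    exact ENNReal.ofReal_lt_ofReal_iff (by linarith) |>.mpr hr
  have hR0 : R ≠ 0 := (zero_lt_one.trans hR1).ne'
  have hRtop : R ≠ ⊤ := ENNReal.ofReal_ne_top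
  rcases le_or_gt α 1 with h1 | h1
  · refine ⟨1, one_pos, one_ne_top, fun f => ?_⟩
    rw [one_mul]
    refine (tsum_rpow_le_of_le_one hα h1 f).trans
      (ENNReal.tsum_le_tsum fun n => ?_)
    conv_lhs => rw [← one_mul (f n ^ α)]
    exact mul_le_mul_left (one_le_pow_of_one_le' hR1.le n) _
  · -- Hölder case
    have hq : α.HolderConjugate (Real.conjExponent α) := Real.HolderConjugate.conjExponent h1
    set q := Real.conjExponent α with hqdef
    have hqpos : 0 < q := hq.symm.pos
    set x := R ^ (-(q / α)) with hxdef
    have hxlt : x < 1 := by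
      have : R ^ (-(q / α)) < R ^ (0 : ℝ) :=
        ENNReal.rpow_lt_rpow_of_exponent_lt hR1 hRtop (neg_lt_zero.mpr (by positivity))
      simpa [ENNReal.rpow_zero] using this
    set G := (1 - x)⁻¹ with hGdef
    have hG0 : G ≠ 0 := by
      simp only [hGdef, ne_eq, ENNReal.inv_eq_zero]
      exact (tsub_le_self.trans_lt ENNReal.one_lt_top).ne
    have hGtop : G ≠ ⊤ := by
      simp only [hGdef, ne_eq, ENNReal.inv_eq_top]
      rw [tsub_eq_zero_iff_le]
      exact fun h => absurd (h.trans_lt hxlt) (lt_irrefl _)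
    refine ⟨G ^ (α / q), ENNReal.rpow_pos (hG0.bot_lt) hGtop, ENNReal.rpow_ne_top_of_nonneg
      (by positivity) hGtop, fun f => ?_⟩
    set u : ℕ → ℝ≥0∞ := fun n => R ^ (-((n : ℝ) / α)) with hudef
    set v : ℕ → ℝ≥0∞ := fun n => R ^ ((n : ℝ) / α) * f n with hvdef
    have huv : ∀ n, f n = (u * v) n := by
      intro n
      simp only [Pi.mul_apply, hudef, hvdef, ← mul_assoc, ← ENNReal.rpow_add _ _ hR0 hRtop]
      simp
    have hmeas : ∀ g : ℕ → ℝ≥0∞, AEMeasurable g (MeasureTheory.Measure.count) :=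
      fun g => (measurable_of_countable g).aemeasurable
    have holder := ENNReal.lintegral_mul_le_Lp_mul_Lq (MeasureTheory.Measure.count)
      hq.symm (hmeas u) (hmeas v)
    rw [MeasureTheory.lintegral_count, MeasureTheory.lintegral_count,
      MeasureTheory.lintegral_count] at holder
    have husum : ∑' n, u n ^ q = G := by
      have : ∀ n : ℕ, u n ^ q = x ^ n := by
        intro n
        rw [hudef, hxdef, ← ENNReal.rpow_natCast (R ^ (-(q / α))) n, ← ENNReal.rpow_mul,
          ← ENNReal.rpow_mul]
        ring_nf
      simp only [this]
      rw [ENNReal.tsum_geometric, hGdef]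
    have hvsum : ∀ n : ℕ, v n ^ α = R ^ n * f n ^ α := by
      intro n
      rw [hvdef]
      rw [ENNReal.mul_rpow_of_nonneg _ _ hα.le, ← ENNReal.rpow_mul,
        div_mul_cancel₀ _ hα.ne', ENNReal.rpow_natCast]
    calc (∑' n, f n) ^ α = (∑' n, (u * v) n) ^ α := by
          congr 1; exact tsum_congr huv
      _ ≤ ((∑' n, u n ^ q) ^ (1 / q) * (∑' n, v n ^ α) ^ (1 / α)) ^ α :=
          ENNReal.rpow_le_rpow holder hα.le
      _ = G ^ (α / q) * ∑' n, R ^ n * f n ^ α := by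
          rw [ENNReal.mul_rpow_of_nonneg _ _ hα.le, ← ENNReal.rpow_mul, ← ENNReal.rpow_mul,
            husum, one_div_mul_eq_div, one_div_mul_eq_div, div_self hα.ne', ENNReal.rpow_one]
          congr 1
          exact tsum_congr hvsum

lemma indicator_rpow (s : Set ℤ) (f : ℤ → ℝ≥0∞) {α : ℝ} (hα : 0 < α) (x : ℤ) :
    s.indicator f x ^ α = s.indicator (fun i => f i ^ α) x := by
  by_cases h : x ∈ s <;> simp [h, ENNReal.zero_rpow_of_pos hα]

theorem sum_tail_sum_power_of_strongly_increasing (α ρ : ℝ) (hα : 0 < α) (hρ : 1 < ρ) :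
    ∃ c C : ℝ, 0 < c ∧ 0 < C ∧
      ∀ (N M : EReal), N < M → ∀ (a b : ℤ → ℝ),
        (∀ k, 0 < a k) → (∀ k, 0 < b k) →
        (∀ k : ℤ, k ∈ zset N M → (k + 1) ∈ zset N M → ρ * a k ≤ a (k + 1)) →
        ENNReal.ofReal c *
            (∑' k : zset N M, ENNReal.ofReal (a (k : ℤ)) * ENNReal.ofReal (b (k : ℤ)) ^ α) ≤
          (∑' k : zset N M, ENNReal.ofReal (a (k : ℤ)) *
              (∑' i : zset (((k : ℤ) : ℝ) : EReal) M, ENNReal.ofReal (b (i : ℤ))) ^ α) ∧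
        (∑' k : zset N M, ENNReal.ofReal (a (k : ℤ)) *
            (∑' i : zset (((k : ℤ) : ℝ) : EReal) M, ENNReal.ofReal (b (i : ℤ))) ^ α) ≤
          ENNReal.ofReal C *
            (∑' k : zset N M, ENNReal.ofReal (a (k : ℤ)) * ENNReal.ofReal (b (k : ℤ)) ^ α) := by
  have hρ0 : 0 < ρ := lt_trans zero_lt_one hρ
  set r := Real.sqrt ρ with hrdef
  have hr1 : 1 < r := by
    rw [hrdef]
    exact (Real.lt_sqrt zero_le_one).mpr (by nlinarith)
  have hrρ : r < ρ := (Real.sqrt_lt' hρ0).mpr (by nlinarith)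
  obtain ⟨C0, hC0pos, hC0top, hkey⟩ := key_nat α r hα hr1
  set R := ENNReal.ofReal r with hRdef
  set x1 := ENNReal.ofReal (r / ρ) with hx1def
  have hx1lt : x1 < 1 := by
    rw [hx1def, ← ENNReal.ofReal_one]
    exact ENNReal.ofReal_lt_ofReal_iff one_pos |>.mpr ((div_lt_one hρ0).mpr hrρ)
  set C1 := (1 - x1)⁻¹ with hC1def
  have hC10 : C1 ≠ 0 := by
    simp only [hC1def, ne_eq, ENNReal.inv_eq_zero]
    exact (tsub_le_self.trans_lt ENNReal.one_lt_top).ne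
  have hC1top : C1 ≠ ⊤ := by
    simp only [hC1def, ne_eq, ENNReal.inv_eq_top]
    rw [tsub_eq_zero_iff_le]
    exact fun h => absurd (h.trans_lt hx1lt) (lt_irrefl _)
  have hCCne : C0 * C1 ≠ ⊤ := ENNReal.mul_ne_top hC0top hC1top
  have hCC0 : C0 * C1 ≠ 0 := mul_ne_zero hC0pos.ne' hC10
  refine ⟨1, (C0 * C1).toReal, one_pos, ENNReal.toReal_pos hCC0 hCCne,
    fun N M _ a b ha hb hmono => ?_⟩
  set Z := zset N M with hZdef
  set A : ℤ → ℝ≥0∞ := fun k => ENNReal.ofReal (a k) with hAdef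
  set Bα : ℤ → ℝ≥0∞ := fun k => ENNReal.ofReal (b k) ^ α with hBαdef
  constructor
  · -- lower bound with c = 1
    rw [ENNReal.ofReal_one, one_mul]
    refine ENNReal.tsum_le_tsum fun k => mul_le_mul_right
      (ENNReal.rpow_le_rpow ?_ hα.le) _
    have hk : (k : ℤ) ∈ zset (((k : ℤ) : ℝ) : EReal) M := ⟨le_refl _, k.2.2⟩
    exact ENNReal.le_tsum (⟨(k : ℤ), hk⟩ : zset (((k : ℤ) : ℝ) : EReal) M)
  · -- upper bound
    -- growth of a
    have grow : ∀ (n : ℕ) (k : ℤ), k ∈ Z → (k + n) ∈ Z → a k * ρ ^ n ≤ a (k + n) := by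
      intro n
      induction n with
      | zero => intro k _ _; simp
      | succ n ih =>
        intro k hk hkn
        have hz1 : k ≤ k + (n : ℤ) := by omega
        have hz2 : k + (n : ℤ) ≤ (k + (n : ℤ)) + 1 := by omega
        have hle1 : ((k : ℝ) : EReal) ≤ (((k + (n : ℤ) : ℤ) : ℝ) : EReal) :=
          ecast_le_ecast.mpr hz1
        have hcast : k + ((n : ℕ) + 1 : ℤ) = (k + (n : ℤ)) + 1 := by ring
        have hkn' : (k + (n : ℤ)) + 1 ∈ Z := by rw [← hcast]; exact_mod_cast hkn
        have hle2 : (((k + (n : ℤ) : ℤ) : ℝ) : EReal) ≤ ((((k + (n : ℤ)) + 1 : ℤ) : ℝ) : EReal) :=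
          ecast_le_ecast.mpr hz2
        have hmid : (k + (n : ℤ)) ∈ Z := ⟨hk.1.trans hle1, hle2.trans hkn'.2⟩
        have h1 := hmono (k + n) hmid hkn'
        have h2 := ih k hk hmid
        calc a k * ρ ^ (n + 1) = (a k * ρ ^ n) * ρ := by ring
          _ ≤ a (k + n) * ρ := mul_le_mul_of_nonneg_right h2 hρ0.le
          _ = ρ * a (k + n) := mul_comm _ _
          _ ≤ a ((k + n) + 1) := h1
          _ = a (k + ((n : ℕ) + 1 : ℤ)) := by rw [hcast]
    -- tail bound for each k
    set W : ℤ → ℤ → ℝ≥0∞ := fun k i =>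
      Set.indicator (zset ((k : ℝ) : EReal) M)
        (fun i => R ^ ((i - k).toNat) * Bα i) i with hWdef
    have tail_bound : ∀ k : ℤ,
        (∑' i : zset ((k : ℝ) : EReal) M, ENNReal.ofReal (b i)) ^ α ≤
          C0 * ∑' i : ℤ, W k i := by
      intro k
      set S := zset ((k : ℝ) : EReal) M with hSdef
      have hginj : Function.Injective (fun n : ℕ => k + (n : ℤ)) := by
        intro m n h; simpa using h
      have hrange : ∀ i : ℤ, i ∈ S → i ∈ Set.range (fun n : ℕ => k + (n : ℤ)) := by
        intro i hi
        have hki : k ≤ i := ecast_le_ecast.mp hi.1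
        exact ⟨(i - k).toNat, by show k + ((i - k).toNat : ℤ) = i; omega⟩
      have heq1 : (∑' i : S, ENNReal.ofReal (b i)) =
          ∑' n : ℕ, Set.indicator S (fun i => ENNReal.ofReal (b i)) (k + n) := by
        rw [tsum_subtype S (fun i => ENNReal.ofReal (b i))]
        exact (Function.Injective.tsum_eq hginj fun i hi =>
          hrange i (Set.support_indicator_subset hi)).symm
      have heq2 : (∑' n : ℕ, R ^ n *
          (Set.indicator S (fun i => ENNReal.ofReal (b i)) (k + n)) ^ α) = ∑' i : ℤ, W k i := by
        have hpt : ∀ n : ℕ, R ^ n *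
            (Set.indicator S (fun i => ENNReal.ofReal (b i)) (k + n)) ^ α = W k (k + n) := by
          intro n
          rw [hWdef, indicator_rpow _ _ hα]
          show R ^ n * S.indicator (fun i => ENNReal.ofReal (b i) ^ α) (k + ↑n) =
            S.indicator (fun i => R ^ (i - k).toNat * Bα i) (k + ↑n)
          by_cases h : (k + (n : ℤ)) ∈ S
          · simp only [Set.indicator_of_mem h]
            congr 2
            omega
          · simp [Set.indicator_of_notMem h]
        rw [tsum_congr hpt]
        exact Function.Injective.tsum_eq hginj fun i hi =>
          hrange i (Set.support_indicator_subset hi)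
      rw [heq1]
      exact (hkey _).trans (by rw [heq2])
    -- main chain
    set F : ℤ → ℤ → ℝ≥0∞ := fun k i => Set.indicator Z (fun k => A k * W k i) k with hFdef
    have step1 : (∑' k : Z, A k *
        (∑' i : zset (((k : ℤ) : ℝ) : EReal) M, ENNReal.ofReal (b i)) ^ α) ≤
        C0 * ∑' k : ℤ, ∑' i : ℤ, F k i := by
      have : ∀ k : Z, A k *
          (∑' i : zset (((k : ℤ) : ℝ) : EReal) M, ENNReal.ofReal (b i)) ^ α ≤
          C0 * (A k * ∑' i : ℤ, W k i) := by
        intro k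
        calc A k * (∑' i : zset (((k : ℤ) : ℝ) : EReal) M, ENNReal.ofReal (b i)) ^ α
            ≤ A k * (C0 * ∑' i : ℤ, W k i) := mul_le_mul_right (tail_bound k) _
          _ = C0 * (A k * ∑' i : ℤ, W k i) := by ring
      refine (ENNReal.tsum_le_tsum this).trans ?_
      rw [ENNReal.tsum_mul_left]
      refine mul_le_mul_right ?_ C0
      rw [tsum_subtype Z (fun k => A k * ∑' i : ℤ, W k i)]
      refine le_of_eq (tsum_congr fun k => ?_)
      by_cases hk : k ∈ Z
      · simp only [Set.indicator_of_mem hk, hFdef]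
        rw [← ENNReal.tsum_mul_left]
      · simp [Set.indicator_of_notMem hk, hFdef]
    -- per-i bound
    have step2 : ∀ i : ℤ, (∑' k : ℤ, F k i) ≤
        C1 * Set.indicator Z (fun i => A i * Bα i) i := by
      intro i
      set h : ℤ → ℝ≥0∞ := fun k => if k ≤ i then x1 ^ ((i - k).toNat) else 0 with hhdef
      have hterm : ∀ k : ℤ, F k i ≤ Set.indicator Z (fun i => A i * Bα i) i * h k := by
        intro k
        by_cases hk : k ∈ Z
        · rw [hFdef]
          simp only [Set.indicator_of_mem hk]
          by_cases hi : i ∈ zset ((k : ℝ) : EReal) M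
          · have hki : k ≤ i := ecast_le_ecast.mp hi.1
            have hiZ : i ∈ Z := ⟨hk.1.trans (ecast_le_ecast.mpr hki), hi.2⟩
            rw [hWdef]
            simp only [Set.indicator_of_mem hi, Set.indicator_of_mem hiZ, hhdef, if_pos hki]
            set n := (i - k).toNat with hndef
            have hik : i = k + (n : ℤ) := by omega
            have hgrow : a k * ρ ^ n ≤ a i := by
              have := grow n k hk (by rw [← hik]; exact hiZ)
              rwa [← hik] at this
            have hreal : a k * r ^ n ≤ a i * (r / ρ) ^ n := by
              have hfact : a k * r ^ n = (a k * ρ ^ n) * (r / ρ) ^ n := by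
                rw [div_pow]
                field_simp
              rw [hfact]
              exact mul_le_mul_of_nonneg_right hgrow (by positivity)
            calc A k * (R ^ n * Bα i) = (A k * R ^ n) * Bα i := by ring
              _ ≤ (A i * x1 ^ n) * Bα i := by
                  refine mul_le_mul_left ?_ _
                  have h0r : (0:ℝ) ≤ r := zero_le_one.trans hr1.le
                  have h0rρ : (0:ℝ) ≤ r / ρ := by positivity
                  rw [hAdef, hRdef, hx1def, ← ENNReal.ofReal_pow h0r,
                    ← ENNReal.ofReal_pow h0rρ, ← ENNReal.ofReal_mul (ha k).le,
                    ← ENNReal.ofReal_mul (ha i).le]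
                  exact ENNReal.ofReal_le_ofReal hreal
              _ = A i * Bα i * x1 ^ n := by ring
          · rw [hWdef]
            simp [Set.indicator_of_notMem hi]
        · rw [hFdef]
          simp [Set.indicator_of_notMem hk]
      refine (ENNReal.tsum_le_tsum hterm).trans ?_
      have hinj : Function.Injective (fun n : ℕ => i - (n : ℤ)) := by
        intro m n hmn; simpa using hmn
      have heq : ∑' k : ℤ, h k = ∑' n : ℕ, x1 ^ n := by
        refine (Function.Injective.tsum_eq hinj ?_).symm.trans ?_
        · intro k hk
          have hki : k ≤ i := by
            by_contra hc
            exact hk (by simp [hhdef, if_neg hc])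
          exact ⟨(i - k).toNat, by show i - ((i - k).toNat : ℤ) = k; omega⟩
        · refine tsum_congr fun n => ?_
          simp only [hhdef]
          rw [if_pos (by omega)]
          congr 1
          omega
      rw [ENNReal.tsum_mul_left, heq, ENNReal.tsum_geometric, ← hC1def, mul_comm]
    calc (∑' k : Z, A k *
          (∑' i : zset (((k : ℤ) : ℝ) : EReal) M, ENNReal.ofReal (b i)) ^ α)
        ≤ C0 * ∑' k : ℤ, ∑' i : ℤ, F k i := step1
      _ = C0 * ∑' i : ℤ, ∑' k : ℤ, F k i := by rw [ENNReal.tsum_comm]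
      _ ≤ C0 * ∑' i : ℤ, C1 * Set.indicator Z (fun i => A i * Bα i) i :=
          mul_le_mul_right (ENNReal.tsum_le_tsum step2) _
      _ = (C0 * C1) * ∑' i : Z, A i * Bα i := by
          rw [ENNReal.tsum_mul_left, ← mul_assoc,
            tsum_subtype Z (fun i => A i * Bα i)]
      _ = ENNReal.ofReal ((C0 * C1).toReal) * ∑' i : Z, A i * Bα i := by
          rw [ENNReal.ofReal_toReal hCCne]
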